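/- Let F = (Q, P) be a saturated FDFA and (x,y) a normalized pair accepted by F, with q = Q(x). Then there exist a positive integer t and an accepting state f' of P_q such that δ(q, y^t) = q, P_q(y^t) = f', and δ_q(f', y^t) = f'. -/

import Mathlib

open Classical

/-- `wpow v n` is the word `v` repeated `n` times. -/
def wpow {α : Type} (v : List α) : ℕ → List α
  | 0 => []
  | n + 1 => wpow v n ++ v

/-- The ultimately periodic infinite word `u·v^ω` (meaningful when `v ≠ []`). -/
def upWord {α : Type} [Inhabited α] (u v : List α) : ℕ → α := fun n =>
  if n < u.length then u.getD n default
  else v.getD ((n - u.length) % v.length) default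

/-- `l` is a prefix of the infinite word `w`. -/
def prefOf {α : Type} [Inhabited α] (l : List α) (w : ℕ → α) : Prop :=
  ∀ i < l.length, w i = l.getD i default

/-- A complete deterministic automaton (no acceptance condition). -/
structure DetAuto (α : Type) : Type 1 where
  State : Type
  [fin : Fintype State]
  init : State
  step : State → α → State

attribute [instance] DetAuto.fin

namespace DetAuto

variable {α : Type}

/-- The state reached from `q` after reading the finite word `w`. -/
def run (A : DetAuto α) (q : A.State) (w : List α) : A.State := w.foldl A.step q

/-- The state reached from the initial state after reading `w`. -/
def eval (A : DetAuto α) (w : List α) : A.State := A.run A.init w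

/-- The (infinite) run of `A` on an infinite word `w`. -/
def runSeq (A : DetAuto α) (w : ℕ → α) : ℕ → A.State
  | 0 => A.init
  | n + 1 => A.step (A.runSeq w n) (w n)

lemma exists_rep (A : DetAuto α) (u v : List α) :
    ∃ i, ∃ j, 1 ≤ j ∧ A.eval (u ++ wpow v i) = A.eval (u ++ wpow v (i + j)) := by
  obtain ⟨a, b, hab, hfab⟩ :=
    Finite.exists_ne_map_eq_of_infinite (fun n : ℕ => A.eval (u ++ wpow v n))
  rcases Nat.lt_or_gt_of_ne hab with h | h
  · exact ⟨a, b - a, by omega, by rw [Nat.add_sub_cancel' h.le]; exact hfab⟩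
  · exact ⟨b, a - b, by omega, by rw [Nat.add_sub_cancel' h.le]; exact hfab.symm⟩

/-- The least `i` in the normalization of `(u,v)` w.r.t. `A`. -/
noncomputable def normI (A : DetAuto α) (u v : List α) : ℕ :=
  Nat.find (A.exists_rep u v)

lemma normI_spec (A : DetAuto α) (u v : List α) :
    ∃ j, 1 ≤ j ∧ A.eval (u ++ wpow v (A.normI u v))
      = A.eval (u ++ wpow v (A.normI u v + j)) :=
  Nat.find_spec (A.exists_rep u v)

/-- The least `j` in the normalization of `(u,v)` w.r.t. `A`. -/
noncomputable def normJ (A : DetAuto α) (u v : List α) : ℕ :=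
  Nat.find (A.normI_spec u v)

/-- The normalization `(x, y) = (u·v^i, v^j)` of `(u,v)` w.r.t. `A`. -/
noncomputable def normalize (A : DetAuto α) (u v : List α) : List α × List α :=
  (u ++ wpow v (A.normI u v), wpow v (A.normJ u v))

/-- The product automaton. -/
def prod (A B : DetAuto α) : DetAuto α where
  State := A.State × B.State
  init := (A.init, B.init)
  step := fun p σ => (A.step p.1 σ, B.step p.2 σ)

end DetAuto

/-- A family of DFAs: a leading automaton and a progress DFA for each of its states. -/
structure FDFA (α : Type) : Type 1 where
  leading : DetAuto α
  pState : leading.State → Type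
  [pFin : ∀ q, Fintype (pState q)]
  pInit : ∀ q, pState q
  pStep : ∀ q, pState q → α → pState q
  pAcc : ∀ q, Set (pState q)

attribute [instance] FDFA.pFin

namespace FDFA

variable {α : Type}

/-- The progress DFA at state `q` accepts the finite word `y`. -/
def progAccept (F : FDFA α) (q : F.leading.State) (y : List α) : Prop :=
  y.foldl (F.pStep q) (F.pInit q) ∈ F.pAcc q

/-- `F` accepts the pair `(u, v)`: with `(x,y)` the normalization of `(u,v)` w.r.t.
the leading automaton, the progress DFA at the state reached on `x` accepts `y`. -/
noncomputable def Accept (F : FDFA α) (u v : List α) : Prop :=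
  F.progAccept (F.leading.eval (F.leading.normalize u v).1) (F.leading.normalize u v).2

/-- `F` is saturated: acceptance of `(u,v)` depends only on the infinite word `u·v^ω`. -/
def Saturated [Inhabited α] (F : FDFA α) : Prop :=
  ∀ u v u' v' : List α, v ≠ [] → v' ≠ [] → upWord u v = upWord u' v' →
    (F.Accept u v ↔ F.Accept u' v')

/-- The complement FDFA: same structure, complemented accepting states. -/
def compl (F : FDFA α) : FDFA α :=
  { F with pAcc := fun q => (F.pAcc q)ᶜ }

end FDFA

section Aux

variable {α : Type}

lemma wpow_length (v : List α) (n : ℕ) : (wpow v n).length = n * v.length := by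
  induction n with
  | zero => simp [wpow]
  | succ n ih => simp [wpow, ih, Nat.succ_mul]

lemma wpow_add (v : List α) (a b : ℕ) : wpow v (a + b) = wpow v a ++ wpow v b := by
  induction b with
  | zero => simp [wpow]
  | succ b ih => simp [wpow, ← Nat.add_assoc, ih]

lemma wpow_getD [Inhabited α] (v : List α) (n k : ℕ) (hk : k < n * v.length) :
    (wpow v n).getD k default = v.getD (k % v.length) default := by
  induction n with
  | zero => omega
  | succ n ih =>
    rw [wpow]
    rcases lt_or_ge k (n * v.length) with h | h
    · rw [List.getD_append _ _ _ _ (by rwa [wpow_length])]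
      exact ih h
    · have h2 : k - n * v.length < v.length := by
        have h3 : (n + 1) * v.length = n * v.length + v.length := by ring
        omega
      have hmod : k % v.length = k - n * v.length := by
        conv_lhs => rw [show k = (k - n * v.length) + n * v.length by omega]
        rw [Nat.add_mul_mod_self_right, Nat.mod_eq_of_lt h2]
      rw [hmod, List.getD_append_right _ _ _ _ (by rwa [wpow_length]), wpow_length]

lemma run_append (A : DetAuto α) (q : A.State) (u v : List α) :
    A.run q (u ++ v) = A.run (A.run q u) v := List.foldl_append

lemma run_wpow_fix (A : DetAuto α) (q : A.State) (y : List α) (h : A.run q y = q)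
    (n : ℕ) : A.run q (wpow y n) = q := by
  induction n with
  | zero => rfl
  | succ n ih => rw [wpow, run_append, ih, h]

end Aux

/-- For a saturated FDFA `F` and a normalized accepted pair `(x,y)`
with `q = Q(x)`, there are `t ≥ 1` and an accepting state `f'` of `P_q` with
`δ(q, y^t) = q`, `P_q(y^t) = f'`, and `δ_q(f', y^t) = f'`. -/
theorem accepted_pair_pumping {α : Type} [Inhabited α] (F : FDFA α) (hF : F.Saturated)
    (x y : List α) (hy : y ≠ []) (hnorm : F.leading.normalize x y = (x, y))
    (hacc : F.Accept x y) :
    ∃ t : ℕ, 1 ≤ t ∧ ∃ f' : F.pState (F.leading.eval x),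
      f' ∈ F.pAcc (F.leading.eval x) ∧
      F.leading.run (F.leading.eval x) (wpow y t) = F.leading.eval x ∧
      (wpow y t).foldl (F.pStep (F.leading.eval x)) (F.pInit (F.leading.eval x)) = f' ∧
      (wpow y t).foldl (F.pStep (F.leading.eval x)) f' = f' := by
  have hL : 0 < y.length := List.length_pos_iff.mpr hy
  set A := F.leading
  set q := A.eval x with hq
  -- extract normI = 0, normJ = 1 from hnorm
  have h1 : x ++ wpow y (A.normI x y) = x := congrArg Prod.fst hnorm
  have h2 : wpow y (A.normJ x y) = y := congrArg Prod.snd hnorm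
  have hI : A.normI x y = 0 := by
    have hlen := congrArg List.length h1
    rw [List.length_append, wpow_length] at hlen
    have h0 : A.normI x y * y.length = 0 := by omega
    rcases Nat.mul_eq_zero.mp h0 with h | h
    · exact h
    · omega
  have hJ : A.normJ x y = 1 := by
    have hlen := congrArg List.length h2
    rw [wpow_length] at hlen
    have h1' : A.normJ x y * y.length = 1 * y.length := by omega
    exact Nat.eq_of_mul_eq_mul_right hL h1'
  -- δ(q, y) = q
  have hspec := A.normI_spec x y
  obtain ⟨j, hj1, hje⟩ := hspec
  have hfix : A.run q y = q := by
    have hfind : A.eval (x ++ wpow y (A.normI x y))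
        = A.eval (x ++ wpow y (A.normI x y + A.normJ x y)) :=
      (Nat.find_spec (A.normI_spec x y)).2
    rw [hI, hJ] at hfind
    simp only [wpow, List.nil_append, List.append_nil] at hfind
    have : A.eval (x ++ y) = A.run q y := run_append A A.init x y
    rw [← this, ← hfind]
  have hrunpow : ∀ n, A.run q (wpow y n) = q := run_wpow_fix A q y hfix
  -- progress states
  set step := F.pStep q with hstep
  set f : ℕ → F.pState q := fun n => (wpow y n).foldl step (F.pInit q) with hf
  have key : ∀ m k, f (m + k) = (wpow y k).foldl step (f m) := by
    intro m k
    simp only [hf, wpow_add, List.foldl_append]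
  obtain ⟨a, b, hab, hfab⟩ := Finite.exists_ne_map_eq_of_infinite f
  wlog hlt : a < b generalizing a b
  · exact this b a hab.symm hfab.symm (by omega)
  set p := b - a with hp
  have hp1 : 1 ≤ p := by omega
  have hper : ∀ m, a ≤ m → f (m + p) = f m := by
    intro m hm
    have e1 : m + p = (a + p) + (m - a) := by omega
    have e2 : m = a + (m - a) := by omega
    rw [e1, key, show a + p = b by omega, ← hfab, ← key, ← e2]
  have hmul : ∀ k m, a ≤ m → f (m + k * p) = f m := by
    intro k
    induction k with
    | zero => intro m _; simp
    | succ k ih =>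
      intro m hm
      have : m + (k + 1) * p = (m + p) + k * p := by ring
      rw [this, ih _ (by omega), hper _ hm]
  refine ⟨(a + 1) * p, Nat.mul_pos (Nat.succ_pos a) hp1, f ((a + 1) * p), ?_,
    hrunpow _, rfl, ?_⟩
  · -- accepting: use saturation with (x, y^t)
    set t := (a + 1) * p with ht
    set v := wpow y t with hv
    have hvlen : v.length = t * y.length := wpow_length y t
    have htpos : 0 < t := Nat.mul_pos (Nat.succ_pos a) hp1
    have htL : 0 < t * y.length := Nat.mul_pos htpos hL
    have hvne : v ≠ [] := by
      apply List.length_pos_iff.mp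
      rw [hvlen]; exact htL
    have hup : upWord x y = upWord x v := by
      funext n
      unfold upWord
      split
      · rfl
      · rw [hv, wpow_length,
          wpow_getD y t _ (Nat.mod_lt _ htL),
          Nat.mod_mod_of_dvd _ (dvd_mul_left y.length t)]
    have haccv : F.Accept x v := (hF x y x v hy hvne hup).mp hacc
    -- normalize (x, v) = (x, v)
    have hIv : A.normI x v = 0 := by
      rw [DetAuto.normI, Nat.find_eq_zero]
      refine ⟨1, le_refl 1, ?_⟩
      show A.eval (x ++ wpow v 0) = A.eval (x ++ wpow v (0 + 1))
      simp only [wpow, List.nil_append, List.append_nil]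
      rw [show A.eval (x ++ v) = A.run q v from run_append A A.init x v, hv, hrunpow]
    have hJv : A.normJ x v = 1 := by
      rw [DetAuto.normJ, Nat.find_eq_iff]
      constructor
      · refine ⟨le_refl 1, ?_⟩
        rw [hIv]
        show A.eval (x ++ wpow v 0) = A.eval (x ++ wpow v (0 + 1))
        simp only [wpow, List.nil_append, List.append_nil]
        rw [show A.eval (x ++ v) = A.run q v from run_append A A.init x v, hv, hrunpow]
      · intro m hm
        intro hcon
        omega
    have hnormv : A.normalize x v = (x, v) := by
      rw [DetAuto.normalize, hIv, hJv]
      simp [wpow]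
    rw [FDFA.Accept, hnormv] at haccv
    exact haccv
  · -- fixed point
    rw [← key]
    have : (a + 1) * p + (a + 1) * p = (a + 1) * p + (a + 1) * p := rfl
    exact hmul (a + 1) ((a + 1) * p) (by nlinarith)
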